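/- Let n ≥ 1 and let f and g be Hermitian complex n×n matrices with W(h) := −log Re trace(exp(−h)) and Z := Re trace(exp(−f)). If equality holds in the Gibbs–Bogoliubov inequality, i.e. W(g) = W(f) + Z⁻¹ · Re trace(exp(−f)·(g − f)), then g − f is a real scalar multiple of the identity matrix; conversely, if g = f + c·1 for some real number c then equality holds. -/

import Mathlib

open Matrix

/-- The generating functional `W(h) = -log Re tr(exp(-h))` of a Hermitian matrix `h`. -/
noncomputable def genFunctional {n : ℕ} (h : Matrix (Fin n) (Fin n) ℂ) : ℝ :=
  -Real.log ((Matrix.trace (NormedSpace.exp (-h))).re)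

namespace GB

variable {n : ℕ}

/-! ### Scalar lemmas -/

lemma ptwise {x y : ℝ} (hx : 0 < x) (hy : 0 < y) :
    x - y ≤ x * (Real.log x - Real.log y) ∧
      (x * (Real.log x - Real.log y) = x - y → x = y) := by
  have hyx : 0 < y / x := div_pos hy hx
  have hcan : x * (y / x) = y := mul_div_cancel₀ y hx.ne'
  have hld : Real.log (y / x) = Real.log y - Real.log x := Real.log_div hy.ne' hx.ne'
  constructor
  · have hle : Real.log (y / x) ≤ y / x - 1 := Real.log_le_sub_one_of_pos hyx
    have := mul_le_mul_of_nonneg_left hle hx.le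
    rw [hld] at this
    nlinarith
  · intro h
    by_contra hne
    have h1 : y / x ≠ 1 := by
      intro h1
      exact hne ((div_eq_one_iff_eq hx.ne').mp h1).symm
    have hlt : Real.log (y / x) < y / x - 1 := Real.log_lt_sub_one_of_pos hyx h1
    rw [hld] at hlt
    have := mul_lt_mul_of_pos_left hlt hx
    nlinarith

lemma core {n : ℕ} (ν μ : Fin n → ℝ) (P : Fin n → Fin n → ℝ)
    (hP : ∀ i j, 0 ≤ P i j)
    (hrow : ∀ i, ∑ j, P i j = 1) (hcol : ∀ j, ∑ i, P i j = 1)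
    {SA SB : ℝ} (hSA : SA = ∑ i, Real.exp (ν i)) (hSB : SB = ∑ j, Real.exp (μ j))
    (hSApos : 0 < SA) (hSBpos : 0 < SB)
    (heq : ∑ i, ∑ j, P i j * ((Real.exp (ν i) / SA) * (ν i - μ j))
        = Real.log SA - Real.log SB) :
    ∀ i j, P i j ≠ 0 → μ j = ν i + (Real.log SB - Real.log SA) := by
  set p : Fin n → ℝ := fun i => Real.exp (ν i) / SA with hp
  set q : Fin n → ℝ := fun j => Real.exp (μ j) / SB with hq
  have hppos : ∀ i, 0 < p i := fun i => div_pos (Real.exp_pos _) hSApos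
  have hqpos : ∀ j, 0 < q j := fun j => div_pos (Real.exp_pos _) hSBpos
  have hlogp : ∀ i, Real.log (p i) = ν i - Real.log SA := fun i => by
    rw [hp]; simp [Real.log_div (Real.exp_ne_zero _) hSApos.ne', Real.log_exp]
  have hlogq : ∀ j, Real.log (q j) = μ j - Real.log SB := fun j => by
    rw [hq]; simp [Real.log_div (Real.exp_ne_zero _) hSBpos.ne', Real.log_exp]
  have hsump : ∑ i, p i = 1 := by
    rw [hp]; rw [← Finset.sum_div]; rw [← hSA]; exact div_self hSApos.ne'
  have hsumq : ∑ j, q j = 1 := by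
    rw [hq]; rw [← Finset.sum_div]; rw [← hSB]; exact div_self hSBpos.ne'
  set t : Fin n → Fin n → ℝ :=
    fun i j => P i j * (p i * (Real.log (p i) - Real.log (q j)) - (p i - q j)) with ht
  have htnn : ∀ i j, 0 ≤ t i j := fun i j =>
    mul_nonneg (hP i j) (sub_nonneg.mpr (ptwise (hppos i) (hqpos j)).1)
  have hsumt : ∑ i, ∑ j, t i j = 0 := by
    have expand : ∀ i j, t i j
        = P i j * (p i * (ν i - μ j)) + (Real.log SB - Real.log SA) * (P i j * p i)
          - P i j * p i + P i j * q j := by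
      intro i j
      rw [ht]; simp only [hlogp, hlogq]; ring
    have h1 : ∑ i, ∑ j, P i j * p i = 1 := by
      calc ∑ i, ∑ j, P i j * p i = ∑ i, (∑ j, P i j) * p i := by
            simp [Finset.sum_mul]
        _ = ∑ i, p i := by simp [hrow]
        _ = 1 := hsump
    have h2 : ∑ i, ∑ j, P i j * q j = 1 := by
      rw [Finset.sum_comm]
      calc ∑ j, ∑ i, P i j * q j = ∑ j, (∑ i, P i j) * q j := by
            simp [Finset.sum_mul]
        _ = ∑ j, q j := by simp [hcol]
        _ = 1 := hsumq
    calc ∑ i, ∑ j, t i j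
        = ∑ i, ∑ j, (P i j * (p i * (ν i - μ j))
            + (Real.log SB - Real.log SA) * (P i j * p i)
            - P i j * p i + P i j * q j) := by
          apply Finset.sum_congr rfl; intro i _
          apply Finset.sum_congr rfl; intro j _
          exact expand i j
      _ = (∑ i, ∑ j, P i j * (p i * (ν i - μ j)))
            + (Real.log SB - Real.log SA) * (∑ i, ∑ j, P i j * p i)
            - (∑ i, ∑ j, P i j * p i) + (∑ i, ∑ j, P i j * q j) := by
          simp [Finset.sum_add_distrib, Finset.sum_sub_distrib, Finset.mul_sum]
      _ = 0 := by
          have : ∑ i, ∑ j, P i j * (p i * (ν i - μ j)) = Real.log SA - Real.log SB := by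
            rw [← heq]
          rw [this, h1, h2]
          try ring
  have hzero : ∀ i j, t i j = 0 := by
    have houter : ∀ i ∈ Finset.univ, (0:ℝ) ≤ ∑ j, t i j := fun i _ =>
      Finset.sum_nonneg (fun j _ => htnn i j)
    intro i j
    have hi : ∑ j, t i j = 0 :=
      (Finset.sum_eq_zero_iff_of_nonneg houter).mp hsumt i (Finset.mem_univ i)
    exact (Finset.sum_eq_zero_iff_of_nonneg (fun j _ => htnn i j)).mp hi j (Finset.mem_univ j)
  intro i j hPij
  have h0 := hzero i j
  rw [ht] at h0
  have hfac : p i * (Real.log (p i) - Real.log (q j)) - (p i - q j) = 0 := by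
    rcases mul_eq_zero.mp h0 with h | h
    · exact absurd h hPij
    · exact h
  have hpq : p i = q j := (ptwise (hppos i) (hqpos j)).2 (by linarith)
  have := congrArg Real.log hpq
  rw [hlogp, hlogq] at this
  linarith

/-! ### Matrix lemmas -/

lemma exp_hermitian {A : Matrix (Fin n) (Fin n) ℂ} (hA : A.IsHermitian) :
    NormedSpace.exp A = (hA.eigenvectorUnitary : Matrix (Fin n) (Fin n) ℂ) *
      diagonal (fun i => (Real.exp (hA.eigenvalues i) : ℂ)) *
      star (hA.eigenvectorUnitary : Matrix (Fin n) (Fin n) ℂ) := by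
  set U : Matrix (Fin n) (Fin n) ℂ := (hA.eigenvectorUnitary : Matrix (Fin n) (Fin n) ℂ) with hU
  have hUnit : IsUnit U :=
    (Matrix.isUnit_iff_isUnit_det U).2 (Matrix.UnitaryGroup.det_isUnit hA.eigenvectorUnitary)
  have hinv : U⁻¹ = star U :=
    Matrix.inv_eq_right_inv (mem_unitaryGroup_iff.mp hA.eigenvectorUnitary.2)
  conv_lhs => rw [hA.spectral_theorem, Unitary.conjStarAlgAut_apply, ← hU, ← hinv, Matrix.exp_conj U _ hUnit]
  rw [Matrix.exp_diagonal, hinv]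
  congr 2
  ext i
  rw [Pi.exp_def]
  simp [← Complex.exp_eq_exp_ℂ, Complex.ofReal_exp]

lemma trace_diag_conj (d e : Fin n → ℂ) (M : Matrix (Fin n) (Fin n) ℂ) :
    trace (diagonal d * M * diagonal e * star M)
      = ∑ i, ∑ j, d i * e j * (M i j * star (M i j)) := by
  rw [Matrix.star_eq_conjTranspose, Matrix.trace]
  apply Finset.sum_congr rfl; intro i _
  rw [Matrix.diag_apply, Matrix.mul_apply]
  apply Finset.sum_congr rfl; intro j _
  rw [Matrix.mul_diagonal, Matrix.diagonal_mul, Matrix.conjTranspose_apply]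
  simp only [RCLike.star_def]
  ring

lemma conj_diag_eq (M : Matrix (Fin n) (Fin n) ℂ) (hM : M * star M = 1)
    (μ : Fin n → ℝ) (w : Fin n → ℂ)
    (h : ∀ i j, M i j ≠ 0 → (μ j : ℂ) = w i) :
    M * diagonal (fun j => (μ j : ℂ)) * star M = diagonal w := by
  ext i k
  rw [Matrix.star_eq_conjTranspose, Matrix.mul_apply]
  simp only [Matrix.mul_diagonal, Matrix.conjTranspose_apply]
  have : ∀ j, M i j * (μ j : ℂ) * star (M k j) = w i * (M i j * star (M k j)) := by
    intro j
    by_cases hij : M i j = 0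
    · simp [hij]
    · rw [h i j hij]; ring
  rw [Finset.sum_congr rfl (fun j _ => this j), ← Finset.mul_sum]
  have hMk : ∑ j, M i j * star (M k j) = (1 : Matrix (Fin n) (Fin n) ℂ) i k := by
    rw [← hM]
    rw [Matrix.star_eq_conjTranspose]
    simp [Matrix.mul_apply, Matrix.conjTranspose_apply]
  rw [hMk]
  by_cases hik : i = k
  · subst hik; simp [Matrix.one_apply]
  · simp [Matrix.one_apply, hik, Matrix.diagonal_apply_ne _ hik]

lemma conj_mul_conj (U A B : Matrix (Fin n) (Fin n) ℂ) (h : star U * U = 1) :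
    (U * A * star U) * (U * B * star U) = U * (A * B) * star U := by
  have h2 : star U * (U * (B * star U)) = B * star U := by
    rw [← mul_assoc, h, one_mul]
  simp only [mul_assoc, h2]

lemma real_smul_one (c : ℝ) :
    c • (1 : Matrix (Fin n) (Fin n) ℂ) = (c : ℂ) • (1 : Matrix (Fin n) (Fin n) ℂ) := by
  ext i j
  simp [Matrix.smul_apply, Complex.real_smul]

lemma exp_real_smul_one (c : ℝ) :
    NormedSpace.exp (c • (1 : Matrix (Fin n) (Fin n) ℂ))
      = (Real.exp c : ℂ) • (1 : Matrix (Fin n) (Fin n) ℂ) := by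
  rw [real_smul_one, Matrix.smul_one_eq_diagonal, Matrix.exp_diagonal,
    Matrix.smul_one_eq_diagonal]
  congr 1
  ext i
  rw [Pi.exp_def]
  simp [← Complex.exp_eq_exp_ℂ, Complex.ofReal_exp]

lemma trace_exp_hermitian {A : Matrix (Fin n) (Fin n) ℂ} (hA : A.IsHermitian) :
    trace (NormedSpace.exp A) = ((∑ i, Real.exp (hA.eigenvalues i) : ℝ) : ℂ) := by
  rw [exp_hermitian hA, Matrix.trace_mul_cycle,
    Matrix.UnitaryGroup.star_mul_self hA.eigenvectorUnitary, one_mul, Matrix.trace_diagonal]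
  push_cast
  rfl

end GB

theorem gibbs_bogoliubov_equality_iff_constant
    {n : ℕ} (hn : 1 ≤ n)
    (f g : Matrix (Fin n) (Fin n) ℂ)
    (hf : f.IsHermitian) (hg : g.IsHermitian) :
    (genFunctional g
        = genFunctional f
          + ((Matrix.trace (NormedSpace.exp (-f))).re)⁻¹
            * (Matrix.trace (NormedSpace.exp (-f) * (g - f))).re
      → ∃ c : ℝ, g - f = c • (1 : Matrix (Fin n) (Fin n) ℂ)) ∧
    (∀ c : ℝ, g = f + c • (1 : Matrix (Fin n) (Fin n) ℂ)
      → genFunctional g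
          = genFunctional f
            + ((Matrix.trace (NormedSpace.exp (-f))).re)⁻¹
              * (Matrix.trace (NormedSpace.exp (-f) * (g - f))).re) := by
  have hne : Nonempty (Fin n) := ⟨⟨0, hn⟩⟩
  have hA : (-f).IsHermitian := hf.neg
  have hB : (-g).IsHermitian := hg.neg
  set ν : Fin n → ℝ := hA.eigenvalues with hν
  set μ : Fin n → ℝ := hB.eigenvalues with hμ
  set SA : ℝ := ∑ i, Real.exp (ν i) with hSA
  set SB : ℝ := ∑ j, Real.exp (μ j) with hSB
  have hSApos : 0 < SA := Finset.sum_pos (fun i _ => Real.exp_pos _) Finset.univ_nonempty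
  have hSBpos : 0 < SB := Finset.sum_pos (fun i _ => Real.exp_pos _) Finset.univ_nonempty
  have htrA : trace (NormedSpace.exp (-f)) = (SA : ℂ) := GB.trace_exp_hermitian hA
  have htrB : trace (NormedSpace.exp (-g)) = (SB : ℂ) := GB.trace_exp_hermitian hB
  have hreA : (trace (NormedSpace.exp (-f))).re = SA := by rw [htrA]; simp
  have hreB : (trace (NormedSpace.exp (-g))).re = SB := by rw [htrB]; simp
  have hWf : genFunctional f = -Real.log SA := by rw [genFunctional, hreA]
  have hWg : genFunctional g = -Real.log SB := by rw [genFunctional, hreB]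
  constructor
  · -- forward direction
    intro heq
    obtain ⟨U, hUU, hUU', hexpA, hfspec⟩ :
        ∃ U : Matrix (Fin n) (Fin n) ℂ, star U * U = 1 ∧ U * star U = 1 ∧
          NormedSpace.exp (-f) = U * diagonal (fun i => ((Real.exp (ν i) : ℝ) : ℂ)) * star U ∧
          -f = U * diagonal (fun i => ((ν i : ℝ) : ℂ)) * star U :=
      ⟨(hA.eigenvectorUnitary : Matrix (Fin n) (Fin n) ℂ),
        Matrix.UnitaryGroup.star_mul_self hA.eigenvectorUnitary,
        mem_unitaryGroup_iff.mp hA.eigenvectorUnitary.2,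
        GB.exp_hermitian hA, hA.spectral_theorem⟩
    obtain ⟨V, hVV, hVV', hgspec⟩ :
        ∃ V : Matrix (Fin n) (Fin n) ℂ, star V * V = 1 ∧ V * star V = 1 ∧
          -g = V * diagonal (fun j => ((μ j : ℝ) : ℂ)) * star V :=
      ⟨(hB.eigenvectorUnitary : Matrix (Fin n) (Fin n) ℂ),
        Matrix.UnitaryGroup.star_mul_self hB.eigenvectorUnitary,
        mem_unitaryGroup_iff.mp hB.eigenvectorUnitary.2,
        hB.spectral_theorem⟩
    set M : Matrix (Fin n) (Fin n) ℂ := star U * V with hM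
    have hMM : M * star M = 1 := by
      rw [hM, Matrix.star_mul, star_star, mul_assoc, ← mul_assoc V, hVV', one_mul, hUU]
    have hM'M : star M * M = 1 := by
      rw [hM, Matrix.star_mul, star_star, mul_assoc, ← mul_assoc U, hUU', one_mul, hVV]
    set P : Fin n → Fin n → ℝ := fun i j => Complex.normSq (M i j) with hP
    have hPnn : ∀ i j, 0 ≤ P i j := fun i j => Complex.normSq_nonneg _
    have hmc : ∀ i j, M i j * star (M i j) = ((P i j : ℝ) : ℂ) := by
      intro i j
      rw [hP, RCLike.star_def]
      exact Complex.mul_conj (M i j)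
    have hrow : ∀ i, ∑ j, P i j = 1 := by
      intro i
      have h1 : ∑ j, M i j * star (M i j) = 1 := by
        have h0 := congrFun (congrFun hMM i) i
        rw [Matrix.mul_apply] at h0
        simpa [Matrix.star_eq_conjTranspose, Matrix.conjTranspose_apply,
          Matrix.one_apply] using h0
      have h2 : ((∑ j, P i j : ℝ) : ℂ) = 1 := by
        push_cast
        rw [← h1]
        exact Finset.sum_congr rfl fun j _ => (hmc i j).symm
      exact_mod_cast h2
    have hcol : ∀ j, ∑ i, P i j = 1 := by
      intro j
      have h1 : ∑ i, M i j * star (M i j) = 1 := by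
        have h0 := congrFun (congrFun hM'M j) j
        rw [Matrix.mul_apply] at h0
        simp only [Matrix.star_eq_conjTranspose, Matrix.conjTranspose_apply,
          Matrix.one_apply_eq] at h0
        rw [← h0]
        exact Finset.sum_congr rfl fun i _ => mul_comm _ _
      have h2 : ((∑ i, P i j : ℝ) : ℂ) = 1 := by
        push_cast
        rw [← h1]
        exact Finset.sum_congr rfl fun i _ => (hmc i j).symm
      exact_mod_cast h2
    have trace_conj : ∀ X : Matrix (Fin n) (Fin n) ℂ, trace (U * X * star U) = trace X := by
      intro X
      rw [Matrix.trace_mul_cycle, hUU, one_mul]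
    -- trace of exp(-f) * (-f)
    have texpAA : trace (NormedSpace.exp (-f) * (-f))
        = ((∑ i, Real.exp (ν i) * ν i : ℝ) : ℂ) := by
      conv_lhs => rw [hexpA]
      rw [hfspec, GB.conj_mul_conj U _ _ hUU, trace_conj, Matrix.diagonal_mul_diagonal,
        Matrix.trace_diagonal]
      push_cast
      rfl
    -- trace of exp(-f) * (-g)
    have hVUM : V = U * M := by rw [hM, ← mul_assoc, hUU', one_mul]
    have texpAB : trace (NormedSpace.exp (-f) * (-g))
        = ((∑ i, ∑ j, Real.exp (ν i) * μ j * P i j : ℝ) : ℂ) := by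
      conv_lhs => rw [hexpA]
      rw [hgspec, hVUM, Matrix.star_mul]
      have hassoc : U * M * diagonal (fun j => ((μ j : ℝ) : ℂ)) * (star M * star U)
          = U * (M * diagonal (fun j => ((μ j : ℝ) : ℂ)) * star M) * star U := by
        simp only [mul_assoc]
      rw [hassoc, GB.conj_mul_conj U _ _ hUU, trace_conj, ← mul_assoc, ← mul_assoc,
        GB.trace_diag_conj]
      push_cast
      apply Finset.sum_congr rfl; intro i _
      apply Finset.sum_congr rfl; intro j _
      rw [hmc i j]
      try push_cast
      try ring
    -- real part of the cross trace
    have htgf : (trace (NormedSpace.exp (-f) * (g - f))).re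
        = (∑ i, Real.exp (ν i) * ν i) - ∑ i, ∑ j, Real.exp (ν i) * μ j * P i j := by
      have hsub : g - f = (-f) - (-g) := by abel
      rw [hsub, mul_sub, Matrix.trace_sub, Complex.sub_re, texpAA, texpAB,
        Complex.ofReal_re, Complex.ofReal_re]
    rw [hWf, hWg, hreA, htgf] at heq
    -- massage into the core hypothesis
    have hsum1 : ∑ i, ∑ j, P i j * ((Real.exp (ν i) / SA) * (ν i - μ j))
        = SA⁻¹ * ((∑ i, Real.exp (ν i) * ν i) - ∑ i, ∑ j, Real.exp (ν i) * μ j * P i j) := by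
      have step1 : ∀ i j, P i j * ((Real.exp (ν i) / SA) * (ν i - μ j))
          = SA⁻¹ * (P i j * (Real.exp (ν i) * ν i) - Real.exp (ν i) * μ j * P i j) := by
        intro i j
        rw [div_eq_mul_inv]
        ring
      calc ∑ i, ∑ j, P i j * ((Real.exp (ν i) / SA) * (ν i - μ j))
          = ∑ i, ∑ j, SA⁻¹ * (P i j * (Real.exp (ν i) * ν i)
              - Real.exp (ν i) * μ j * P i j) := by
            exact Finset.sum_congr rfl fun i _ =>
              Finset.sum_congr rfl fun j _ => step1 i j
        _ = SA⁻¹ * ((∑ i, ∑ j, P i j * (Real.exp (ν i) * ν i))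
              - ∑ i, ∑ j, Real.exp (ν i) * μ j * P i j) := by
            simp [Finset.mul_sum, Finset.sum_sub_distrib, mul_sub]
        _ = SA⁻¹ * ((∑ i, Real.exp (ν i) * ν i)
              - ∑ i, ∑ j, Real.exp (ν i) * μ j * P i j) := by
            congr 2
            apply Finset.sum_congr rfl; intro i _
            rw [← Finset.sum_mul, hrow i, one_mul]
    have hcore : ∑ i, ∑ j, P i j * ((Real.exp (ν i) / SA) * (ν i - μ j))
        = Real.log SA - Real.log SB := by
      rw [hsum1]
      have hne' : SA ≠ 0 := hSApos.ne'
      field_simp at heq ⊢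
      linarith [heq]
    have hμν := GB.core ν μ P hPnn hrow hcol hSA hSB hSApos hSBpos hcore
    set c0 : ℝ := Real.log SB - Real.log SA with hc0
    -- reconstruction
    have hMne : ∀ i j, M i j ≠ 0 → ((μ j : ℝ) : ℂ) = ((ν i + c0 : ℝ) : ℂ) := by
      intro i j hij
      have hP0 : P i j ≠ 0 := fun h0 => hij (Complex.normSq_eq_zero.mp h0)
      exact_mod_cast congrArg (Complex.ofReal) (hμν i j hP0)
    have hdiag : M * diagonal (fun j => ((μ j : ℝ) : ℂ)) * star M
        = diagonal (fun i => ((ν i + c0 : ℝ) : ℂ)) :=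
      GB.conj_diag_eq M hMM μ _ hMne
    have hBg : -g = -f + (c0 : ℂ) • (1 : Matrix (Fin n) (Fin n) ℂ) := by
      rw [hgspec, hVUM, Matrix.star_mul]
      have hassoc : U * M * diagonal (fun j => ((μ j : ℝ) : ℂ)) * (star M * star U)
          = U * (M * diagonal (fun j => ((μ j : ℝ) : ℂ)) * star M) * star U := by
        simp only [mul_assoc]
      rw [hassoc, hdiag]
      have hsplit : diagonal (fun i => ((ν i + c0 : ℝ) : ℂ))
          = diagonal (fun i => ((ν i : ℝ) : ℂ))
            + (c0 : ℂ) • (1 : Matrix (Fin n) (Fin n) ℂ) := by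
        ext i j
        by_cases hij : i = j
        · subst hij
          simp only [Matrix.diagonal_apply_eq, Matrix.add_apply, Matrix.smul_apply,
            Matrix.one_apply_eq, smul_eq_mul, mul_one]
          push_cast
          ring
        · simp [Matrix.diagonal_apply_ne _ hij, Matrix.one_apply_ne hij]
      rw [hsplit, mul_add, add_mul, ← hfspec]
      congr 1
      rw [Matrix.mul_smul, Matrix.smul_mul, mul_one, hUU']
    refine ⟨-c0, ?_⟩
    have h5 : g = f - (c0 : ℂ) • (1 : Matrix (Fin n) (Fin n) ℂ) := by
      have h6 := congrArg Neg.neg hBg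
      rw [neg_neg, neg_add, neg_neg] at h6
      rw [h6]
      abel
    rw [GB.real_smul_one, h5, Complex.ofReal_neg, neg_smul]
    abel
  · -- converse direction
    intro c hc
    have hgf : g - f = c • (1 : Matrix (Fin n) (Fin n) ℂ) := by rw [hc]; abel
    have hneg : -g = -f + (-c) • (1 : Matrix (Fin n) (Fin n) ℂ) := by
      rw [hc]; push_cast; rw [neg_smul]; abel
    have hcomm : Commute (-f) ((-c) • (1 : Matrix (Fin n) (Fin n) ℂ)) :=
      (Commute.one_right (-f)).smul_right (-c)
    have hexpg : NormedSpace.exp (-g)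
        = NormedSpace.exp (-f) * ((Real.exp (-c) : ℂ) • 1) := by
      rw [hneg, Matrix.exp_add_of_commute _ _ hcomm, GB.exp_real_smul_one]
    have htr : trace (NormedSpace.exp (-g)) = (Real.exp (-c) : ℂ) * trace (NormedSpace.exp (-f)) := by
      rw [hexpg, Matrix.mul_smul, mul_one, Matrix.trace_smul, smul_eq_mul]
    have hSBval : SB = Real.exp (-c) * SA := by
      have := congrArg Complex.re htr
      rw [hreB, htrA] at this
      rw [this, Complex.re_ofReal_mul, Complex.ofReal_re]
    -- the trace term
    have htr2 : (trace (NormedSpace.exp (-f) * (g - f))).re = c * SA := by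
      rw [hgf, GB.real_smul_one, Matrix.mul_smul, mul_one, Matrix.trace_smul, smul_eq_mul]
      rw [htrA]
      push_cast
      simp
    rw [hWg, hWf, hreA, htr2, hSBval, Real.log_mul (Real.exp_ne_zero _) hSApos.ne',
      Real.log_exp]
    field_simp
    try ring
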